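/- Let (B_t)_{t≥0} be a standard Brownian motion, c ∈ (0,1), and ε ∈ (0,1). For T > 0 define S_{T,c} = sup_{0 ≤ s < t ≤ T, t − s < c} |B_t − B_s| / ω_{1/2}(t − s). If x > 0 satisfies P(S_{1,c} > x) ≤ ε, then P(S_{2,c} > x) ≥ (2 − ε) P(S_{1,c} > x). -/

import Mathlib

open MeasureTheory ProbabilityTheory
open scoped ENNReal

/-- `ℓ(t) = -log t` for `0 < t ≤ 1/3` and `ℓ(t) = log 3` for `t ≥ 1/3`. -/
noncomputable def ell (t : ℝ) : ℝ := if t ≤ 1/3 then -Real.log t else Real.log 3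

/-- `ω_q(t) = (t ℓ(t))^q` for `t > 0` and `ω_q(0) = 0`. -/
noncomputable def omegaQ (q t : ℝ) : ℝ := if t = 0 then 0 else (t * ell t) ^ q

/-- `B` is a standard Brownian motion on the probability space `(Ω, P)`. -/
def IsStdBM {Ω : Type*} [MeasurableSpace Ω] (P : Measure Ω) (B : ℝ → Ω → ℝ) : Prop :=
  (∀ t : ℝ, Measurable (B t)) ∧
  (∀ᵐ ω ∂P, ContinuousOn (fun t => B t ω) (Set.Ici (0:ℝ))) ∧
  (∀ᵐ ω ∂P, B 0 ω = 0) ∧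
  (∀ s t : ℝ, 0 ≤ s → s ≤ t →
    Measure.map (fun ω => B t ω - B s ω) P = gaussianReal 0 (Real.toNNReal (t - s))) ∧
  (∀ u : ℕ → ℝ, (∀ i, 0 ≤ u i) → Monotone u →
    iIndepFun (fun i ω => B (u (i+1)) ω - B (u i) ω) P)

/-- `S_{T,c}(ω) = sup_{0 ≤ s < t ≤ T, t - s < c} |B_t(ω) - B_s(ω)| / ω_{1/2}(t-s)`,
regarded as a `[0,∞]`-valued random variable. -/
noncomputable def Sbm {Ω : Type*} (B : ℝ → Ω → ℝ) (T c : ℝ) (ω : Ω) : ℝ≥0∞ :=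
  ⨆ (s : ℝ) (t : ℝ) (_ : 0 ≤ s) (_ : s < t) (_ : t ≤ T) (_ : t - s < c),
    ENNReal.ofReal (|B t ω - B s ω| / omegaQ (1/2) (t - s))

open Filter
open scoped Topology Classical


open MeasureTheory ProbabilityTheory Filter
open scoped ENNReal Topology


lemma ell_eq_max {t : ℝ} (ht : 0 < t) : ell t = max (-Real.log t) (Real.log 3) := by
  unfold ell
  rcases le_or_gt t (1/3) with h | h
  · rw [if_pos h, max_eq_left]
    have : Real.log t ≤ Real.log (1/3) := Real.log_le_log ht h
    rw [Real.log_div one_ne_zero (by norm_num), Real.log_one] at this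
    linarith
  · rw [if_neg (not_le.2 h), max_eq_right]
    have : Real.log (1/3) ≤ Real.log t := Real.log_le_log (by norm_num) h.le
    rw [Real.log_div one_ne_zero (by norm_num), Real.log_one] at this
    linarith

lemma ell_pos {t : ℝ} (ht : 0 < t) : 0 < ell t := by
  rw [ell_eq_max ht]
  exact lt_max_of_lt_right (Real.log_pos (by norm_num))

lemma omegaQ_pos {t : ℝ} (ht : 0 < t) : 0 < omegaQ (1/2) t := by
  rw [omegaQ, if_neg ht.ne']
  exact Real.rpow_pos_of_pos (mul_pos ht (ell_pos ht)) _

lemma omegaQ_continuousAt {t : ℝ} (ht : 0 < t) : ContinuousAt (omegaQ (1/2)) t := by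
  have h1 : ContinuousAt (fun u : ℝ => (u * max (-Real.log u) (Real.log 3)) ^ (1/2 : ℝ)) t := by
    apply ContinuousAt.rpow_const
    · exact (continuousAt_id.mul (((Real.continuousAt_log ht.ne').neg).max continuousAt_const))
    · right; norm_num
  apply h1.congr
  filter_upwards [eventually_gt_nhds ht] with u hu
  rw [omegaQ, if_neg hu.ne', ell_eq_max hu]

open MeasureTheory ProbabilityTheory Filter
open scoped ENNReal Topology Classical

/-- admissibility of a rational pair -/
def Adm (c : ℝ) (r : ℚ × ℚ) : Prop :=
  0 ≤ (r.1 : ℝ) ∧ (r.1 : ℝ) < (r.2 : ℝ) ∧ (r.2 : ℝ) ≤ 1 ∧ (r.2 : ℝ) - (r.1 : ℝ) < c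

noncomputable def pv (c : ℝ) (f : ℝ → ℝ) (r : ℚ × ℚ) : ℝ≥0∞ :=
  if Adm c r then
    ENNReal.ofReal (|f ((r.2 : ℝ)) - f ((r.1 : ℝ))| / omegaQ (1/2) ((r.2 : ℝ) - (r.1 : ℝ)))
  else 0

noncomputable def ratSup (c : ℝ) (f : ℝ → ℝ) : ℝ≥0∞ := ⨆ r : ℚ × ℚ, pv c f r

lemma le_ratSup {c : ℝ} {f : ℝ → ℝ} (hf : ContinuousOn f (Set.Ici 0))
    {s t : ℝ} (hs : 0 ≤ s) (hst : s < t) (ht : t ≤ 1) (htc : t - s < c) :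
    ENNReal.ofReal (|f t - f s| / omegaQ (1/2) (t - s)) ≤ ratSup c f := by
  -- choose rational approximating pairs
  have H1 : ∀ n : ℕ, ∃ a : ℚ, s < (a : ℝ) ∧ (a : ℝ) < min t (s + 1/(n+1)) := by
    intro n
    have hp : (0:ℝ) < 1/(n+1) := by positivity
    exact exists_rat_btwn (lt_min hst (by linarith))
  choose a ha1 ha2 using H1
  have H2 : ∀ n : ℕ, ∃ b : ℚ, max ((a n : ℝ)) (t - 1/(n+1)) < (b : ℝ) ∧ (b : ℝ) < t := by
    intro n
    have hp : (0:ℝ) < 1/(n+1) := by positivity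
    refine exists_rat_btwn (max_lt ((ha2 n).trans_le (min_le_left _ _)) (by linarith))
  choose b hb1 hb2 using H2
  have han : ∀ n : ℕ, (a n : ℝ) ≤ s + 1/(n+1) := fun n =>
    ((ha2 n).trans_le (min_le_right _ _)).le
  have hbn : ∀ n : ℕ, t - 1/(n+1) ≤ (b n : ℝ) := fun n =>
    ((le_max_right _ _).trans_lt (hb1 n)).le
  have hab : ∀ n : ℕ, (a n : ℝ) < (b n : ℝ) := fun n =>
    (le_max_left _ _).trans_lt (hb1 n)
  have hone : Tendsto (fun n : ℕ => 1/((n : ℝ)+1)) atTop (𝓝 0) :=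
    tendsto_one_div_add_atTop_nhds_zero_nat
  have hta : Tendsto (fun n => (a n : ℝ)) atTop (𝓝 s) := by
    apply tendsto_of_tendsto_of_tendsto_of_le_of_le tendsto_const_nhds
      (by simpa using tendsto_const_nhds.add hone)
      (fun n => (ha1 n).le) han
  have htb : Tendsto (fun n => (b n : ℝ)) atTop (𝓝 t) := by
    apply tendsto_of_tendsto_of_tendsto_of_le_of_le
      (by simpa using tendsto_const_nhds.sub hone) tendsto_const_nhds
      hbn (fun n => (hb2 n).le)
  have hfa : Tendsto (fun n => f (a n : ℝ)) atTop (𝓝 (f s)) := by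
    apply (hf s hs).tendsto.comp
    rw [tendsto_nhdsWithin_iff]
    exact ⟨hta, Eventually.of_forall fun n => hs.trans (ha1 n).le⟩
  have hfb : Tendsto (fun n => f (b n : ℝ)) atTop (𝓝 (f t)) := by
    apply (hf t (hs.trans hst.le)).tendsto.comp
    rw [tendsto_nhdsWithin_iff]
    exact ⟨htb, Eventually.of_forall fun n =>
      (hs.trans (ha1 n).le).trans (hab n).le⟩
  have hgap : Tendsto (fun n => (b n : ℝ) - (a n : ℝ)) atTop (𝓝 (t - s)) := htb.sub hta
  have homega : Tendsto (fun n => omegaQ (1/2) ((b n : ℝ) - (a n : ℝ))) atTop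
      (𝓝 (omegaQ (1/2) (t - s))) :=
    (omegaQ_continuousAt (by linarith)).tendsto.comp hgap
  have hval : Tendsto (fun n => |f (b n : ℝ) - f (a n : ℝ)| / omegaQ (1/2) ((b n : ℝ) - (a n : ℝ)))
      atTop (𝓝 (|f t - f s| / omegaQ (1/2) (t - s))) :=
    ((hfb.sub hfa).abs).div homega (omegaQ_pos (by linarith)).ne'
  have hofr := (ENNReal.continuous_ofReal.tendsto _).comp hval
  refine le_of_tendsto_of_tendsto' hofr tendsto_const_nhds (fun n => ?_)
  have hadm : Adm c (a n, b n) := by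
    refine ⟨hs.trans (ha1 n).le, hab n, ((hb2 n).trans_le ht).le, ?_⟩
    have := ha1 n; have := hb2 n
    dsimp only; linarith
  calc ENNReal.ofReal (|f (b n : ℝ) - f (a n : ℝ)| / omegaQ (1/2) ((b n : ℝ) - (a n : ℝ)))
      = pv c f (a n, b n) := by rw [pv, if_pos hadm]
    _ ≤ ratSup c f := le_iSup _ _

lemma sbm_eq_ratSup {c : ℝ} (hc : c ∈ Set.Ioo (0:ℝ) 1) {f : ℝ → ℝ}
    (hf : ContinuousOn f (Set.Ici 0)) :
    (⨆ (s : ℝ) (t : ℝ) (_ : 0 ≤ s) (_ : s < t) (_ : t ≤ 1) (_ : t - s < c),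
      ENNReal.ofReal (|f t - f s| / omegaQ (1/2) (t - s))) = ratSup c f := by
  apply le_antisymm
  · refine iSup_le fun s => iSup_le fun t => iSup_le fun hs => iSup_le fun hst =>
      iSup_le fun ht => iSup_le fun htc => ?_
    exact le_ratSup hf hs hst ht htc
  · refine iSup_le fun r => ?_
    rw [pv]
    split_ifs with h
    · obtain ⟨h1, h2, h3, h4⟩ := h
      exact le_iSup_of_le ((r.1 : ℝ)) (le_iSup_of_le ((r.2 : ℝ)) (le_iSup_of_le h1
        (le_iSup_of_le h2 (le_iSup_of_le h3 (le_iSup_of_le h4 le_rfl)))))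
    · exact zero_le

section Grid

noncomputable def gfun (g : Finset ℝ) (j : ℕ) : ℝ :=
  if h : 0 < g.card then g.orderEmbOfFin rfl ⟨min j (g.card - 1), by omega⟩ else 0

noncomputable def gidx (g : Finset ℝ) (a : ℝ) : ℕ :=
  if h : a ∈ g then ((g.orderIsoOfFin rfl).symm ⟨a, h⟩ : Fin g.card).1 else 0

lemma gidx_lt {g : Finset ℝ} {a : ℝ} (ha : a ∈ g) : gidx g a < g.card := by
  rw [gidx, dif_pos ha]; exact ((g.orderIsoOfFin rfl).symm ⟨a, ha⟩).2

lemma gfun_eq {g : Finset ℝ} {j : ℕ} (hj : j < g.card) :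
    gfun g j = g.orderEmbOfFin rfl ⟨j, hj⟩ := by
  rw [gfun, dif_pos (by omega)]
  congr 1
  exact Fin.ext (by simp; omega)

lemma gfun_gidx {g : Finset ℝ} {a : ℝ} (ha : a ∈ g) : gfun g (gidx g a) = a := by
  rw [gfun_eq (gidx_lt ha)]
  have : gidx g a = ((g.orderIsoOfFin rfl).symm ⟨a, ha⟩ : Fin g.card).1 := by
    rw [gidx, dif_pos ha]
  have h2 : (⟨gidx g a, gidx_lt ha⟩ : Fin g.card) = (g.orderIsoOfFin rfl).symm ⟨a, ha⟩ :=
    Fin.ext this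
  rw [h2]
  have := (g.orderIsoOfFin rfl).apply_symm_apply ⟨a, ha⟩
  rw [← Finset.coe_orderIsoOfFin_apply, this]

lemma gfun_mem {g : Finset ℝ} (hg : 0 < g.card) (j : ℕ) : gfun g j ∈ g := by
  rw [gfun, dif_pos hg]; exact Finset.orderEmbOfFin_mem _ _ _

lemma gfun_mono (g : Finset ℝ) : Monotone (gfun g) := by
  intro i j hij
  rw [gfun, gfun]
  split_ifs with h
  · exact (g.orderEmbOfFin rfl).monotone (by simp [Fin.le_def]; omega)
  · exact le_rfl

lemma gfun_strictMonoOn {g : Finset ℝ} {i j : ℕ} (hij : i < j) (hj : j < g.card) :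
    gfun g i < gfun g j := by
  rw [gfun_eq (hij.trans hj), gfun_eq hj]
  exact (g.orderEmbOfFin rfl).strictMono (by simp [Fin.lt_def]; omega)

lemma gidx_eq_of {g : Finset ℝ} {a : ℝ} (ha : a ∈ g) {j : ℕ} (hj : j < g.card)
    (he : gfun g j = a) : gidx g a = j := by
  rcases lt_trichotomy (gidx g a) j with h | h | h
  · have := gfun_strictMonoOn h hj
    rw [gfun_gidx ha, he] at this; exact absurd this (lt_irrefl a)
  · exact h
  · have := gfun_strictMonoOn h (gidx_lt ha)
    rw [gfun_gidx ha, he] at this; exact absurd this (lt_irrefl a)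

lemma gidx_lt_gidx {g : Finset ℝ} {a b : ℝ} (ha : a ∈ g) (hb : b ∈ g) (hab : a < b) :
    gidx g a < gidx g b := by
  by_contra h
  push_neg at h
  rcases eq_or_lt_of_le h with h | h
  · have : gfun g (gidx g b) = gfun g (gidx g a) := by rw [h]
    rw [gfun_gidx ha, gfun_gidx hb] at this
    exact absurd (this ▸ hab) (lt_irrefl _)
  · have := gfun_strictMonoOn h (gidx_lt ha)
    rw [gfun_gidx ha, gfun_gidx hb] at this
    exact absurd (hab.trans this) (lt_irrefl a)

/-- telescoping sum -/
lemma sum_Ico_tel (F : ℕ → ℝ) {p q : ℕ} (hpq : p ≤ q) :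
    ∑ j ∈ Finset.Ico p q, (F (j+1) - F j) = F q - F p := by
  induction q, hpq using Nat.le_induction with
  | base => simp
  | succ n hn ih =>
    rw [Finset.sum_Ico_succ_top (by omega), ih]
    ring

/-- increments over grid points telescoped -/
lemma sub_eq_sum_inc {g : Finset ℝ} {a b : ℝ} (ha : a ∈ g) (hb : b ∈ g) (hab : a ≤ b)
    (F : ℝ → ℝ) :
    F b - F a = ∑ j ∈ Finset.Ico (gidx g a) (gidx g b), (F (gfun g (j+1)) - F (gfun g j)) := by
  have h : gidx g a ≤ gidx g b := by
    rcases eq_or_lt_of_le hab with h | h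
    · rw [h]
    · exact (gidx_lt_gidx ha hb h).le
  rw [show (∑ j ∈ Finset.Ico (gidx g a) (gidx g b), (F (gfun g (j+1)) - F (gfun g j)))
      = F (gfun g (gidx g b)) - F (gfun g (gidx g a)) from
    sum_Ico_tel (fun j => F (gfun g j)) h, gfun_gidx ha, gfun_gidx hb]

/-- shifted grid -/
lemma gfun_image_add {g : Finset ℝ} (hg : 0 < g.card) (d : ℝ) (j : ℕ) :
    gfun (g.image (· + d)) j = gfun g j + d := by
  have hcard : (g.image (· + d)).card = g.card :=
    Finset.card_image_of_injective _ (fun x y h => by simpa using h)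
  have hgi : 0 < (g.image (· + d)).card := by omega
  have key : ∀ i : Fin g.card,
      (g.image (· + d)).orderEmbOfFin hcard i = g.orderEmbOfFin rfl i + d := by
    have := Finset.orderEmbOfFin_unique (f := fun i : Fin g.card => g.orderEmbOfFin rfl i + d)
      hcard (fun i => Finset.mem_image_of_mem _ (Finset.orderEmbOfFin_mem _ _ _))
      (fun i j hij => by simpa using (g.orderEmbOfFin rfl).strictMono hij)
    intro i; rw [← this]
  rw [gfun, dif_pos hgi, gfun, dif_pos hg]
  have hm : min j ((g.image (· + d)).card - 1) = min j (g.card - 1) := by rw [hcard]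
  have : ((g.image (· + d)).orderEmbOfFin rfl) ⟨min j ((g.image (· + d)).card - 1), by omega⟩
      = ((g.image (· + d)).orderEmbOfFin hcard) ⟨min j (g.card - 1), by omega⟩ := by
    apply Finset.orderEmbOfFin_eq_orderEmbOfFin_iff.2
    exact hm
  rw [this, key]

lemma gidx_image_add {g : Finset ℝ} {a : ℝ} (ha : a ∈ g) (d : ℝ) :
    gidx (g.image (· + d)) (a + d) = gidx g a := by
  have hcard : (g.image (· + d)).card = g.card :=
    Finset.card_image_of_injective _ (fun x y h => by simpa using h)
  have hg : 0 < g.card := Finset.card_pos.2 ⟨a, ha⟩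
  apply gidx_eq_of (Finset.mem_image_of_mem _ ha) (by have := gidx_lt ha; omega)
  rw [gfun_image_add hg, gfun_gidx ha]

end Grid


/-- enumeration of rational pairs -/
noncomputable def epair (n : ℕ) : ℚ × ℚ := (Denumerable.eqv (ℚ × ℚ)).symm n

lemma epair_surj : Function.Surjective epair := (Denumerable.eqv (ℚ × ℚ)).symm.surjective

def EvS {Ω : Type*} (D : ℝ → Ω → ℝ) (c x : ℝ) (r : ℚ × ℚ) : Set Ω :=
  {ω | ENNReal.ofReal x < pv c (fun t => D t ω) r}

def AN {Ω : Type*} (D : ℝ → Ω → ℝ) (c x : ℝ) (N : ℕ) : Set Ω :=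
  ⋃ n ∈ Finset.range N, EvS D c x (epair n)

lemma AN_mono {Ω : Type*} (D : ℝ → Ω → ℝ) (c x : ℝ) : Monotone (AN D c x) := by
  intro N M hNM
  refine Set.iUnion₂_subset fun n hn => Set.subset_iUnion₂_of_subset n
    (Finset.mem_range.2 (lt_of_lt_of_le (Finset.mem_range.1 hn) hNM)) subset_rfl

lemma setA_eq {Ω : Type*} (D : ℝ → Ω → ℝ) (c x : ℝ) :
    {ω | ENNReal.ofReal x < ratSup c (fun t => D t ω)} = ⋃ N, AN D c x N := by
  ext ω
  simp only [Set.mem_setOf_eq, ratSup, lt_iSup_iff, AN, EvS, Set.mem_iUnion,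
    Finset.mem_range, Set.mem_setOf_eq]
  constructor
  · rintro ⟨r, hr⟩
    obtain ⟨n, rfl⟩ := epair_surj r
    exact ⟨n + 1, n, by omega, hr⟩
  · rintro ⟨N, n, _, hn⟩
    exact ⟨epair n, hn⟩

lemma EvS_measurable {Ω : Type*} [MeasurableSpace Ω] {D : ℝ → Ω → ℝ}
    (hD : ∀ t, Measurable (D t)) (c x : ℝ) (r : ℚ × ℚ) :
    MeasurableSet (EvS D c x r) := by
  unfold EvS pv
  split_ifs with h
  · exact measurableSet_lt measurable_const
      (ENNReal.measurable_ofReal.comp (((hD _).sub (hD _)).abs.div measurable_const))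
  · exact measurableSet_lt measurable_const measurable_const

lemma AN_measurable {Ω : Type*} [MeasurableSpace Ω] {D : ℝ → Ω → ℝ}
    (hD : ∀ t, Measurable (D t)) (c x : ℝ) (N : ℕ) :
    MeasurableSet (AN D c x N) :=
  MeasurableSet.biUnion (Finset.range N).countable_toSet
    (fun n _ => EvS_measurable hD c x (epair n))

lemma ratSup_le_Sbm2 {Ω : Type*} (B : ℝ → Ω → ℝ) (c : ℝ) (ω : Ω) :
    ratSup c (fun t => B t ω) ≤ Sbm B 2 c ω := by
  refine iSup_le fun r => ?_
  rw [pv]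
  split_ifs with h
  · obtain ⟨h1, h2, h3, h4⟩ := h
    exact le_iSup_of_le ((r.1 : ℝ)) (le_iSup_of_le ((r.2 : ℝ)) (le_iSup_of_le h1
      (le_iSup_of_le h2 (le_iSup_of_le (by linarith) (le_iSup_of_le h4 le_rfl)))))
  · exact zero_le

lemma ratSup_shift_le_Sbm2 {Ω : Type*} (B : ℝ → Ω → ℝ) (c : ℝ) (ω : Ω) :
    ratSup c (fun t => B (t + 1) ω) ≤ Sbm B 2 c ω := by
  refine iSup_le fun r => ?_
  rw [pv]
  split_ifs with h
  · obtain ⟨h1, h2, h3, h4⟩ := h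
    refine le_iSup_of_le ((r.1 : ℝ) + 1) (le_iSup_of_le ((r.2 : ℝ) + 1)
      (le_iSup_of_le (by linarith) (le_iSup_of_le (by linarith)
      (le_iSup_of_le (by linarith) (le_iSup_of_le (by linarith) (le_of_eq ?_))))))
    norm_num
  · exact zero_le

lemma iSup_mul_mono {a b : ℕ → ℝ≥0∞} (ha : Monotone a) (hb : Monotone b) :
    ⨆ n, a n * b n = (⨆ n, a n) * (⨆ n, b n) := by
  apply le_antisymm
  · exact iSup_le fun n => mul_le_mul' (le_iSup a n) (le_iSup b n)
  · rw [ENNReal.iSup_mul]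
    refine iSup_le fun i => ?_
    rw [ENNReal.mul_iSup]
    refine iSup_le fun j => ?_
    calc a i * b j ≤ a (max i j) * b (max i j) :=
          mul_le_mul' (ha (le_max_left _ _)) (hb (le_max_right _ _))
      _ ≤ ⨆ n, a n * b n := le_iSup (fun n => a n * b n) (max i j)


lemma map_grid_inc {Ω : Type*} [MeasurableSpace Ω] {P : Measure Ω}
    {B : ℝ → Ω → ℝ} (hB : IsStdBM P B) (g : Finset ℝ) (hg : 0 < g.card)
    (hpos : ∀ y ∈ g, 0 ≤ y) (m : ℕ) :
    Measure.map (fun ω (j : Fin m) => B (gfun g (j.1+1)) ω - B (gfun g j.1) ω) P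
      = Measure.pi (fun j : Fin m =>
          gaussianReal 0 (Real.toNNReal (gfun g (j.1+1) - gfun g j.1))) := by
  obtain ⟨hmeas, -, -, hgauss, hindep⟩ := hB
  have hu0 : ∀ j, 0 ≤ gfun g j := fun j => hpos _ (gfun_mem hg j)
  have hi := hindep (gfun g) hu0 (gfun_mono g)
  set inc : ℕ → Ω → ℝ := fun j ω => B (gfun g (j+1)) ω - B (gfun g j) ω with hinc
  have hincm : ∀ j, Measurable (inc j) := fun j => (hmeas _).sub (hmeas _)
  symm
  apply MeasureTheory.Measure.pi_eq
  intro s hs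
  classical
  set S : ℕ → Set ℝ := fun j => if h : j < m then s ⟨j, h⟩ else Set.univ with hS
  have hSm : ∀ j, MeasurableSet (S j) := by
    intro j
    rw [hS]
    dsimp only
    split_ifs with h
    · exact hs _
    · exact MeasurableSet.univ
  have hWm : Measurable (fun ω (j : Fin m) => inc j.1 ω) :=
    measurable_pi_lambda _ fun j => hincm j.1
  have h1 : Measure.map (fun ω (j : Fin m) => inc j.1 ω) P (Set.pi Set.univ s)
      = P (⋂ j ∈ Finset.range m, inc j ⁻¹' S j) := by
    rw [MeasureTheory.Measure.map_apply hWm (MeasurableSet.univ_pi hs)]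
    congr 1
    ext ω
    simp only [Set.mem_preimage, Set.mem_pi, Set.mem_univ, forall_true_left,
      Set.mem_iInter, Finset.mem_range]
    constructor
    · intro h j hj
      rw [hS]
      dsimp only
      rw [dif_pos hj]
      exact h ⟨j, hj⟩
    · intro h j
      have := h j.1 j.2
      rw [hS] at this
      dsimp only at this
      rwa [dif_pos j.2, Fin.eta] at this
  have h2 := hi.measure_inter_preimage_eq_mul (Finset.range m) (fun j _ => hSm j)
  rw [h1, h2]
  rw [show (∏ j ∈ Finset.range m, P (inc j ⁻¹' S j))
      = ∏ j : Fin m, P (inc j.1 ⁻¹' S j.1) from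
    (Fin.prod_univ_eq_prod_range (fun j => P (inc j ⁻¹' S j)) m).symm]
  apply Finset.prod_congr rfl
  intro j _
  have hmap := hgauss (gfun g j.1) (gfun g (j.1+1)) (hu0 _) (gfun_mono g (by omega))
  have : P (inc j.1 ⁻¹' S j.1)
      = Measure.map (fun ω => B (gfun g (j.1+1)) ω - B (gfun g j.1) ω) P (S j.1) := by
    rw [MeasureTheory.Measure.map_apply (hincm j.1) (hSm j.1)]
  rw [this, hmap]
  congr 1
  rw [hS]
  dsimp only
  rw [dif_pos j.2, Fin.eta]

lemma sum_fin_ite {m : ℕ} (f : ℕ → ℝ) (p q : ℕ) (hq : q ≤ m) :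
    (∑ j : Fin m, (if p ≤ j.1 ∧ j.1 < q then f j.1 else 0)) = ∑ j ∈ Finset.Ico p q, f j := by
  classical
  rw [Fin.sum_univ_eq_sum_range (fun j => if p ≤ j ∧ j < q then f j else 0) m,
    ← Finset.sum_filter]
  congr 1
  ext j
  simp only [Finset.mem_filter, Finset.mem_range, Finset.mem_Ico]
  exact ⟨fun ⟨_, h2, h3⟩ => ⟨h2, h3⟩, fun ⟨h2, h3⟩ => ⟨lt_of_lt_of_le h3 hq, h2, h3⟩⟩

lemma keyN {Ω : Type*} [MeasurableSpace Ω] {P : Measure Ω} [IsProbabilityMeasure P]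
    {B : ℝ → Ω → ℝ} (hB : IsStdBM P B) {c x : ℝ} (hc : c ∈ Set.Ioo (0:ℝ) 1)
    (hx : 0 < x) (N : ℕ) :
    P (AN (fun t ω => B (t+1) ω) c x N) = P (AN B c x N) ∧
    P (AN B c x N ∩ AN (fun t ω => B (t+1) ω) c x N)
      = P (AN B c x N) * P (AN (fun t ω => B (t+1) ω) c x N) := by
  classical
  set pts : Finset ℝ := insert 0 (insert 1 (
      ((Finset.range N).filter (fun n => Adm c (epair n))).image (fun n => ((epair n).1 : ℝ)) ∪
      ((Finset.range N).filter (fun n => Adm c (epair n))).image (fun n => ((epair n).2 : ℝ))))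
    with hpts
  have h0pts : (0:ℝ) ∈ pts := by simp [hpts]
  have h1pts : (1:ℝ) ∈ pts := by simp [hpts]
  have hWithin : ∀ y ∈ pts, 0 ≤ y ∧ y ≤ 1 := by
    intro y hy
    rw [hpts] at hy
    simp only [Finset.mem_insert, Finset.mem_union, Finset.mem_image, Finset.mem_filter,
      Finset.mem_range] at hy
    rcases hy with rfl | rfl | ⟨n, ⟨-, hadm⟩, rfl⟩ | ⟨n, ⟨-, hadm⟩, rfl⟩
    · norm_num
    · norm_num
    · obtain ⟨h1, h2, h3, -⟩ := hadm; exact ⟨h1, by linarith⟩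
    · obtain ⟨h1, h2, h3, -⟩ := hadm; exact ⟨by linarith, h3⟩
  have hmemr : ∀ n, n < N → Adm c (epair n) →
      ((epair n).1 : ℝ) ∈ pts ∧ ((epair n).2 : ℝ) ∈ pts := by
    intro n hn hadm
    rw [hpts]
    constructor
    · simp only [Finset.mem_insert, Finset.mem_union, Finset.mem_image, Finset.mem_filter,
        Finset.mem_range]
      exact Or.inr (Or.inr (Or.inl ⟨n, ⟨hn, hadm⟩, rfl⟩))
    · simp only [Finset.mem_insert, Finset.mem_union, Finset.mem_image, Finset.mem_filter,
        Finset.mem_range]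
      exact Or.inr (Or.inr (Or.inr ⟨n, ⟨hn, hadm⟩, rfl⟩))
  have hgpos : 0 < pts.card := Finset.card_pos.2 ⟨0, h0pts⟩
  set m := pts.card - 1 with hm
  set pts1 := pts.image (· + 1) with hpts1
  have hcard1 : pts1.card = pts.card :=
    Finset.card_image_of_injective _ (fun a b h => by simpa using h)
  have h1pos : 0 < pts1.card := by omega
  have hpos0 : ∀ y ∈ pts, 0 ≤ y := fun y hy => (hWithin y hy).1
  have hpos1 : ∀ y ∈ pts1, 0 ≤ y := by
    intro y hy
    rw [hpts1] at hy
    obtain ⟨z, hz, rfl⟩ := Finset.mem_image.1 hy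
    have := (hWithin z hz).1; linarith
  -- the map equality
  have hmapEq : Measure.map (fun ω (j : Fin m) => B (gfun pts (j.1+1)) ω - B (gfun pts j.1) ω) P
      = Measure.map (fun ω (j : Fin m) => B (gfun pts1 (j.1+1)) ω - B (gfun pts1 j.1) ω) P := by
    rw [map_grid_inc hB pts hgpos hpos0 m, map_grid_inc hB pts1 h1pos hpos1 m]
    congr 1
    funext j
    rw [hpts1, gfun_image_add hgpos, gfun_image_add hgpos]
    ring_nf
  -- target sets
  set T : ℕ → Set (Fin m → ℝ) := fun n => {v | ENNReal.ofReal x <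
    (if Adm c (epair n) then ENNReal.ofReal ((|∑ j : Fin m,
        (if gidx pts ((epair n).1:ℝ) ≤ j.1 ∧ j.1 < gidx pts ((epair n).2:ℝ) then v j else 0)|)
      / omegaQ (1/2) (((epair n).2:ℝ) - ((epair n).1:ℝ))) else 0)} with hT
  have hTm : ∀ n, MeasurableSet (T n) := by
    intro n
    rw [hT]
    dsimp only
    by_cases h : Adm c (epair n)
    · simp only [if_pos h]
      apply measurableSet_lt measurable_const
      apply ENNReal.measurable_ofReal.comp
      apply Measurable.div _ measurable_const
      apply Measurable.abs
      apply Finset.measurable_sum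
      intro j _
      by_cases hj : gidx pts ((epair n).1:ℝ) ≤ j.1 ∧ j.1 < gidx pts ((epair n).2:ℝ)
      · simpa only [if_pos hj] using measurable_pi_apply j
      · simpa only [if_neg hj] using measurable_const
    · simp only [if_neg h]
      have : {v : Fin m → ℝ | ENNReal.ofReal x < 0} = ∅ := by
        ext v; simp
      rw [this]; exact MeasurableSet.empty
  set U : Set (Fin m → ℝ) := ⋃ n ∈ Finset.range N, T n with hU
  have hUm : MeasurableSet U :=
    MeasurableSet.biUnion (Finset.range N).countable_toSet (fun n _ => hTm n)
  -- event as preimage, unshifted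
  have hAW : AN B c x N
      = (fun ω (j : Fin m) => B (gfun pts (j.1+1)) ω - B (gfun pts j.1) ω) ⁻¹' U := by
    rw [AN, hU, Set.preimage_iUnion₂]
    apply Set.iUnion₂_congr
    intro n hn
    rw [Finset.mem_range] at hn
    ext ω
    simp only [EvS, Set.mem_setOf_eq, Set.mem_preimage, hT]
    rw [pv]
    by_cases h : Adm c (epair n)
    · obtain ⟨hr1, hr2⟩ := hmemr n hn h
      have hqm : gidx pts ((epair n).2:ℝ) ≤ m := by
        have := gidx_lt hr2; omega
      have hsum : (∑ j : Fin m, (if gidx pts ((epair n).1:ℝ) ≤ j.1 ∧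
            j.1 < gidx pts ((epair n).2:ℝ) then
            B (gfun pts (j.1+1)) ω - B (gfun pts j.1) ω else 0))
          = B ((epair n).2:ℝ) ω - B ((epair n).1:ℝ) ω := by
        rw [sum_fin_ite (fun j => B (gfun pts (j+1)) ω - B (gfun pts j) ω) _ _ hqm]
        exact (sub_eq_sum_inc hr1 hr2 h.2.1.le (fun y => B y ω)).symm
      rw [hsum]
    · rw [if_neg h, if_neg h]
  -- event as preimage, shifted
  have hAW' : AN (fun t ω => B (t+1) ω) c x N
      = (fun ω (j : Fin m) => B (gfun pts1 (j.1+1)) ω - B (gfun pts1 j.1) ω) ⁻¹' U := by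
    rw [AN, hU, Set.preimage_iUnion₂]
    apply Set.iUnion₂_congr
    intro n hn
    rw [Finset.mem_range] at hn
    ext ω
    simp only [EvS, Set.mem_setOf_eq, Set.mem_preimage, hT]
    rw [pv]
    by_cases h : Adm c (epair n)
    · obtain ⟨hr1, hr2⟩ := hmemr n hn h
      have hr1' : ((epair n).1:ℝ) + 1 ∈ pts1 := by
        rw [hpts1]; exact Finset.mem_image_of_mem _ hr1
      have hr2' : ((epair n).2:ℝ) + 1 ∈ pts1 := by
        rw [hpts1]; exact Finset.mem_image_of_mem _ hr2
      have hqm : gidx pts ((epair n).2:ℝ) ≤ m := by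
        have := gidx_lt hr2; omega
      have hsum : (∑ j : Fin m, (if gidx pts ((epair n).1:ℝ) ≤ j.1 ∧
            j.1 < gidx pts ((epair n).2:ℝ) then
            B (gfun pts1 (j.1+1)) ω - B (gfun pts1 j.1) ω else 0))
          = B (((epair n).2:ℝ) + 1) ω - B (((epair n).1:ℝ) + 1) ω := by
        rw [sum_fin_ite (fun j => B (gfun pts1 (j+1)) ω - B (gfun pts1 j) ω) _ _ hqm]
        have htel := sub_eq_sum_inc hr1' hr2' (by have := h.2.1; linarith) (fun y => B y ω)
        rw [hpts1, gidx_image_add hr1, gidx_image_add hr2] at htel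
        rw [← hpts1] at htel
        exact htel.symm
      rw [hsum]
    · rw [if_neg h, if_neg h]
  have hWmeas : Measurable (fun ω (j : Fin m) => B (gfun pts (j.1+1)) ω - B (gfun pts j.1) ω) :=
    measurable_pi_lambda _ fun j => (hB.1 _).sub (hB.1 _)
  have hW'meas : Measurable (fun ω (j : Fin m) => B (gfun pts1 (j.1+1)) ω - B (gfun pts1 j.1) ω) :=
    measurable_pi_lambda _ fun j => (hB.1 _).sub (hB.1 _)
  have hfirst : P (AN (fun t ω => B (t+1) ω) c x N) = P (AN B c x N) := by
    rw [hAW, hAW', ← MeasureTheory.Measure.map_apply hWmeas hUm,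
      ← MeasureTheory.Measure.map_apply hW'meas hUm, hmapEq]
  refine ⟨hfirst, ?_⟩
  -- independence part
  set G := pts ∪ pts1 with hG
  have hGpos : 0 < G.card := by
    apply Finset.card_pos.2
    exact ⟨0, by rw [hG]; exact Finset.mem_union_left _ h0pts⟩
  have hGnonneg : ∀ j, 0 ≤ gfun G j := by
    intro j
    have := gfun_mem hGpos j
    rw [hG] at this
    rcases Finset.mem_union.1 this with h | h
    · exact hpos0 _ h
    · exact hpos1 _ h
  set incG : ℕ → Ω → ℝ := fun j ω => B (gfun G (j+1)) ω - B (gfun G j) ω with hincG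
  have hincGm : ∀ j, Measurable (incG j) := fun j => (hB.1 _).sub (hB.1 _)
  have hiG : iIndepFun incG P :=
    hB.2.2.2.2 (gfun G) hGnonneg (gfun_mono G)
  have hiG' : iIndep (fun j => MeasurableSpace.comap (incG j) inferInstance) P := hiG
  set Sset : Set ℕ := {j : ℕ | gfun G (j+1) ≤ 1 ∧ gfun G j < gfun G (j+1)} with hSset
  set Tset : Set ℕ := {j : ℕ | 1 ≤ gfun G j ∧ gfun G j < gfun G (j+1)} with hTset
  have hdisj : Disjoint Sset Tset := by
    rw [Set.disjoint_left]
    rintro j ⟨h1, h2⟩ ⟨h3, h4⟩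
    rw [hSset] at *
    linarith
  have hIndep := ProbabilityTheory.indep_iSup_of_disjoint
    (fun j => ((hincGm j).comap_le)) hiG' hdisj
  -- measurability of increments wrt the sup sigma-algebras
  have hsub : ∀ (a b : ℝ), a ∈ G → b ∈ G → a ≤ b →
      (fun ω => B b ω - B a ω)
        = fun ω => ∑ j ∈ Finset.Ico (gidx G a) (gidx G b), incG j ω := by
    intro a b ha hb hab
    funext ω
    exact sub_eq_sum_inc ha hb hab (fun y => B y ω)
  have hmeasS : ∀ (a b : ℝ), a ∈ G → b ∈ G → a ≤ b → b ≤ 1 →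
      Measurable[⨆ j ∈ Sset, MeasurableSpace.comap (incG j) inferInstance]
        (fun ω => B b ω - B a ω) := by
    intro a b ha hb hab hb1
    rw [hsub a b ha hb hab]
    apply Finset.measurable_sum
    intro j hj
    rw [Finset.mem_Ico] at hj
    have hjS : j ∈ Sset := by
      rw [hSset]
      have h1 : gfun G (j+1) ≤ gfun G (gidx G b) := gfun_mono G (by omega)
      rw [gfun_gidx hb] at h1
      have h2 : gfun G j < gfun G (j+1) :=
        gfun_strictMonoOn (by omega) (by have := gidx_lt hb; omega)
      exact ⟨le_trans h1 hb1, h2⟩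
    exact (Measurable.of_comap_le le_rfl).mono
      (le_iSup₂ (f := fun (j : ℕ) (_ : j ∈ Sset) =>
        MeasurableSpace.comap (incG j) inferInstance) j hjS) le_rfl
  have hmeasT : ∀ (a b : ℝ), a ∈ G → b ∈ G → a ≤ b → 1 ≤ a →
      Measurable[⨆ j ∈ Tset, MeasurableSpace.comap (incG j) inferInstance]
        (fun ω => B b ω - B a ω) := by
    intro a b ha hb hab ha1
    rw [hsub a b ha hb hab]
    apply Finset.measurable_sum
    intro j hj
    rw [Finset.mem_Ico] at hj
    have hjT : j ∈ Tset := by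
      rw [hTset]
      have h1 : gfun G (gidx G a) ≤ gfun G j := gfun_mono G (by omega)
      rw [gfun_gidx ha] at h1
      have h2 : gfun G j < gfun G (j+1) :=
        gfun_strictMonoOn (by omega) (by have := gidx_lt hb; omega)
      exact ⟨le_trans ha1 h1, h2⟩
    exact (Measurable.of_comap_le le_rfl).mono
      (le_iSup₂ (f := fun (j : ℕ) (_ : j ∈ Tset) =>
        MeasurableSpace.comap (incG j) inferInstance) j hjT) le_rfl
  -- W measurable wrt M_S / M_T
  have hptsG : pts ⊆ G := by rw [hG]; exact Finset.subset_union_left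
  have hpts1G : pts1 ⊆ G := by rw [hG]; exact Finset.subset_union_right
  have hWS : Measurable[⨆ j ∈ Sset, MeasurableSpace.comap (incG j) inferInstance]
      (fun ω (j : Fin m) => B (gfun pts (j.1+1)) ω - B (gfun pts j.1) ω) := by
    letI : MeasurableSpace Ω := ⨆ j ∈ Sset, MeasurableSpace.comap (incG j) inferInstance
    apply measurable_pi_iff.mpr
    intro j
    apply hmeasS
    · exact hptsG (gfun_mem hgpos j.1)
    · exact hptsG (gfun_mem hgpos (j.1+1))
    · exact gfun_mono pts (by omega)
    · exact (hWithin _ (gfun_mem hgpos (j.1+1))).2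
  have hWT : Measurable[⨆ j ∈ Tset, MeasurableSpace.comap (incG j) inferInstance]
      (fun ω (j : Fin m) => B (gfun pts1 (j.1+1)) ω - B (gfun pts1 j.1) ω) := by
    letI : MeasurableSpace Ω := ⨆ j ∈ Tset, MeasurableSpace.comap (incG j) inferInstance
    apply measurable_pi_iff.mpr
    intro j
    apply hmeasT
    · exact hpts1G (gfun_mem h1pos j.1)
    · exact hpts1G (gfun_mem h1pos (j.1+1))
    · exact gfun_mono pts1 (by omega)
    · -- 1 ≤ gfun pts1 j
      have := gfun_mem h1pos j.1
      rw [hpts1] at this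
      obtain ⟨z, hz, hze⟩ := Finset.mem_image.1 this
      have := (hWithin z hz).1
      rw [← hze]
      linarith
  have hAS : MeasurableSet[⨆ j ∈ Sset, MeasurableSpace.comap (incG j) inferInstance]
      (AN B c x N) := by
    rw [hAW]; exact hWS hUm
  have hAT : MeasurableSet[⨆ j ∈ Tset, MeasurableSpace.comap (incG j) inferInstance]
      (AN (fun t ω => B (t+1) ω) c x N) := by
    rw [hAW']; exact hWT hUm
  exact (ProbabilityTheory.Indep_iff _ _ _).1 hIndep _ _ hAS hAT

/-- for a standard Brownian motion `B`, `c ∈ (0,1)` and `ε ∈ (0,1)`, if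
`x > 0` satisfies `P(S_{1,c} > x) ≤ ε` then `P(S_{2,c} > x) ≥ (2 - ε) P(S_{1,c} > x)`. -/
theorem Sbm_two_ge_of_tail_small {Ω : Type*} [MeasurableSpace Ω] (P : Measure Ω)
    [IsProbabilityMeasure P] (B : ℝ → Ω → ℝ) (hB : IsStdBM P B)
    (c : ℝ) (hc : c ∈ Set.Ioo (0:ℝ) 1) (ε : ℝ) (hε : ε ∈ Set.Ioo (0:ℝ) 1)
    (x : ℝ) (hx : 0 < x)
    (htail : P {ω | Sbm B 1 c ω > ENNReal.ofReal x} ≤ ENNReal.ofReal ε) :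
    P {ω | Sbm B 2 c ω > ENNReal.ofReal x}
      ≥ ENNReal.ofReal (2 - ε) * P {ω | Sbm B 1 c ω > ENNReal.ofReal x} := by
  have hPA : P {ω | Sbm B 1 c ω > ENNReal.ofReal x}
      = P {ω | ENNReal.ofReal x < ratSup c (fun t => B t ω)} := by
    apply measure_congr
    filter_upwards [hB.2.1] with ω hω
    have hsbm : Sbm B 1 c ω = ratSup c (fun t => B t ω) := sbm_eq_ratSup hc hω
    show (Sbm B 1 c ω > ENNReal.ofReal x) = (ENNReal.ofReal x < ratSup c fun t => B t ω)
    rw [gt_iff_lt, hsbm]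
  set A : Set Ω := {ω | ENNReal.ofReal x < ratSup c (fun t => B t ω)} with hA
  set A' : Set Ω := {ω | ENNReal.ofReal x < ratSup c (fun t => B (t+1) ω)} with hA'
  have hAeq : A = ⋃ N, AN B c x N := setA_eq B c x
  have hA'eq : A' = ⋃ N, AN (fun t ω => B (t+1) ω) c x N := setA_eq (fun t ω => B (t+1) ω) c x
  have hmonoA : Monotone (fun N => P (AN B c x N)) :=
    fun N M h => measure_mono (AN_mono B c x h)
  have hmonoA' : Monotone (fun N => P (AN (fun t ω => B (t+1) ω) c x N)) :=
    fun N M h => measure_mono (AN_mono _ c x h)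
  have hPAsup : P A = ⨆ N, P (AN B c x N) := by
    rw [hAeq]; exact ((AN_mono B c x).directed_le).measure_iUnion
  have hPA'sup : P A' = ⨆ N, P (AN (fun t ω => B (t+1) ω) c x N) := by
    rw [hA'eq]; exact ((AN_mono _ c x).directed_le).measure_iUnion
  have hP1 : P A' = P A := by
    rw [hPAsup, hPA'sup]
    exact iSup_congr fun N => (keyN hB hc hx N).1
  have hIeq : A ∩ A' = ⋃ N, (AN B c x N ∩ AN (fun t ω => B (t+1) ω) c x N) := by
    rw [hAeq, hA'eq]
    ext ω
    simp only [Set.mem_inter_iff, Set.mem_iUnion]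
    constructor
    · rintro ⟨⟨N1, h1⟩, N2, h2⟩
      exact ⟨max N1 N2, AN_mono B c x (le_max_left _ _) h1, AN_mono _ c x (le_max_right _ _) h2⟩
    · rintro ⟨N, h1, h2⟩
      exact ⟨⟨N, h1⟩, N, h2⟩
  have hPint : P (A ∩ A') = P A * P A' := by
    rw [hIeq]
    have hdir : Directed (· ⊆ ·) (fun N => AN B c x N ∩ AN (fun t ω => B (t+1) ω) c x N) := by
      apply Monotone.directed_le
      intro N M h
      exact Set.inter_subset_inter (AN_mono B c x h) (AN_mono _ c x h)
    rw [hdir.measure_iUnion]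
    calc (⨆ N, P (AN B c x N ∩ AN (fun t ω => B (t+1) ω) c x N))
        = ⨆ N, P (AN B c x N) * P (AN (fun t ω => B (t+1) ω) c x N) :=
          iSup_congr fun N => (keyN hB hc hx N).2
      _ = (⨆ N, P (AN B c x N)) * (⨆ N, P (AN (fun t ω => B (t+1) ω) c x N)) :=
          iSup_mul_mono hmonoA hmonoA'
      _ = P A * P A' := by rw [hPAsup, hPA'sup]
  have hsub : A ∪ A' ⊆ {ω | Sbm B 2 c ω > ENNReal.ofReal x} := by
    rintro ω (hω | hω)
    · exact lt_of_lt_of_le hω (ratSup_le_Sbm2 B c ω)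
    · exact lt_of_lt_of_le hω (ratSup_shift_le_Sbm2 B c ω)
  have hA'm : MeasurableSet A' := by
    rw [hA'eq]
    exact MeasurableSet.iUnion fun N => AN_measurable (fun t => hB.1 (t+1)) c x N
  have hincl : P (A ∪ A') + P (A ∩ A') = P A + P A' := measure_union_add_inter A hA'm
  have htail' : P A ≤ ENNReal.ofReal ε := by rw [← hPA]; exact htail
  have hPP : P A * P A' ≠ ⊤ := ENNReal.mul_ne_top (measure_ne_top _ _) (measure_ne_top _ _)
  rw [ge_iff_le, hPA]
  refine le_trans ?_ (measure_mono hsub)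
  have hsum2 : P (A ∪ A') + P A * P A' = P A + P A' := by rw [← hPint]; exact hincl
  have hstep : ENNReal.ofReal (2 - ε) * P A + P A * P A' ≤ P (A ∪ A') + P A * P A' := by
    rw [hsum2, hP1]
    calc ENNReal.ofReal (2 - ε) * P A + P A * P A
        = (ENNReal.ofReal (2 - ε) + P A) * P A := by rw [add_mul]
      _ ≤ (ENNReal.ofReal (2 - ε) + ENNReal.ofReal ε) * P A :=
          mul_le_mul_left (add_le_add_right htail' _) _
      _ = 2 * P A := by
          rw [← ENNReal.ofReal_add (by linarith [hε.2]) hε.1.le]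
          norm_num
      _ = P A + P A := two_mul _
  exact (ENNReal.add_le_add_iff_right hPP).1 hstep
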